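/- Let A, B, C, D be points of the Euclidean plane such that ∠ABC = π/2, ∠ADC = π/2, and B and D lie strictly on opposite sides of the line through A and C. Let A', B', C', D' be points of the plane with dist(A', B') = dist(A, B), dist(A', D') = dist(A, D), dist(A', C') = dist(A, C), ∠B'C'D' = ∠BCD, and such that B' and D' lie strictly on opposite sides of the line through A' and C'. Then the two quadrilaterals are congruent: there is an isometric equivalence φ : ℝ² ≃ᵢ ℝ² with φ(A) = A', φ(B) = B', φ(C) = C', φ(D) = D'. -/

import Mathlib

noncomputable section

open EuclideanGeometry Real

/-- The Euclidean plane. -/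
abbrev Plane : Type := EuclideanSpace ℝ (Fin 2)

open RealInnerProductSpace

instance : Fact (Module.finrank ℝ Plane = 2) := ⟨finrank_euclideanSpace_fin⟩
instance : Module.Oriented ℝ Plane (Fin 2) :=
  ⟨Module.Basis.orientation ((EuclideanSpace.basisFun (Fin 2) ℝ).toBasis)⟩

lemma angle_abs_add (θ₁ θ₂ : Real.Angle) (hs : θ₁.sign = θ₂.sign) (h0 : θ₁.sign ≠ 0) :
    |(θ₁ + θ₂).toReal| = |θ₁.toReal| + |θ₂.toReal| ∨
      |(θ₁ + θ₂).toReal| = 2 * π - (|θ₁.toReal| + |θ₂.toReal|) := by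
  set a := θ₁.toReal with ha
  set b := θ₂.toReal with hb
  have hsum : θ₁ + θ₂ = ((a + b : ℝ) : Real.Angle) := by
    rw [Real.Angle.coe_add, Real.Angle.coe_toReal, Real.Angle.coe_toReal]
  have ha1 : -π < a := Real.Angle.neg_pi_lt_toReal θ₁
  have ha2 : a ≤ π := Real.Angle.toReal_le_pi θ₁
  have hb1 : -π < b := Real.Angle.neg_pi_lt_toReal θ₂
  have hb2 : b ≤ π := Real.Angle.toReal_le_pi θ₂
  have h0' : θ₂.sign ≠ 0 := hs ▸ h0
  have hane : a ≠ 0 ∧ a ≠ π := by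
    rw [Real.Angle.sign_ne_zero_iff] at h0
    exact ⟨fun h => h0.1 (by rw [← Real.Angle.coe_toReal θ₁, ← ha, h]; simp),
      fun h => h0.2 (by rw [← Real.Angle.coe_toReal θ₁, ← ha, h])⟩
  have hbne : b ≠ 0 ∧ b ≠ π := by
    rw [Real.Angle.sign_ne_zero_iff] at h0'
    exact ⟨fun h => h0'.1 (by rw [← Real.Angle.coe_toReal θ₂, ← hb, h]; simp),
      fun h => h0'.2 (by rw [← Real.Angle.coe_toReal θ₂, ← hb, h])⟩
  have hpi := Real.pi_pos
  rcases lt_or_ge a 0 with hA | hA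
  · have hB : b < 0 := by
      rw [Real.Angle.toReal_neg_iff_sign_neg, ← hs, ← Real.Angle.toReal_neg_iff_sign_neg]
      exact hA
    rcases lt_or_ge (-π) (a + b) with h | h
    · left
      rw [hsum, Real.Angle.toReal_coe_eq_self_iff.2 ⟨h, by linarith⟩,
        abs_of_neg (by linarith), abs_of_neg hA, abs_of_neg hB]
      ring
    · right
      have : ((a + b : ℝ) : Real.Angle) = ((a + b + 2 * π : ℝ) : Real.Angle) := by
        rw [Real.Angle.coe_add (a + b) (2 * π), Real.Angle.coe_two_pi, add_zero]
      rw [hsum, this, Real.Angle.toReal_coe_eq_self_iff.2 ⟨by linarith, by linarith⟩,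
        abs_of_pos (by nlinarith), abs_of_neg hA, abs_of_neg hB]
      ring
  · have hA' : 0 < a := lt_of_le_of_ne hA (Ne.symm hane.1)
    have hB : 0 ≤ b := by
      rw [Real.Angle.toReal_nonneg_iff_sign_nonneg, ← hs,
        ← Real.Angle.toReal_nonneg_iff_sign_nonneg]
      exact hA
    have hB' : 0 < b := lt_of_le_of_ne hB (Ne.symm hbne.1)
    have ha2' : a < π := lt_of_le_of_ne ha2 hane.2
    have hb2' : b < π := lt_of_le_of_ne hb2 hbne.2
    rcases le_or_gt (a + b) π with h | h
    · left
      rw [hsum, Real.Angle.toReal_coe_eq_self_iff.2 ⟨by linarith, h⟩,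
        abs_of_pos (by linarith), abs_of_pos hA', abs_of_pos hB']
    · right
      have : ((a + b : ℝ) : Real.Angle) = ((a + b - 2 * π : ℝ) : Real.Angle) := by
        rw [Real.Angle.coe_sub (a + b) (2 * π), Real.Angle.coe_two_pi, sub_zero]
      rw [hsum, this, Real.Angle.toReal_coe_eq_self_iff.2 ⟨by linarith, by linarith⟩,
        abs_of_neg (by nlinarith), abs_of_pos hA', abs_of_pos hB']
      ring

lemma split_angle {A B C D : Plane} (hAC : A ≠ C)
    (hside : (affineSpan ℝ ({A, C} : Set Plane)).SOppSide B D) :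
    ∠ B C D = ∠ B C A + ∠ A C D ∨ ∠ B C D = 2 * π - (∠ B C A + ∠ A C D) := by
  have hA : A ∈ affineSpan ℝ ({A, C} : Set Plane) := mem_affineSpan ℝ (by simp)
  have hC : C ∈ affineSpan ℝ ({A, C} : Set Plane) := mem_affineSpan ℝ (by simp)
  have hBs := hside.left_notMem
  have hDs := hside.right_notMem
  have hBC : B ≠ C := fun h => hBs (h ▸ hC)
  have hDC : D ≠ C := fun h => hDs (h ▸ hC)
  have hBA : B ≠ A := fun h => hBs (h ▸ hA)
  have hDA : D ≠ A := fun h => hDs (h ▸ hA)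
  have hadd : ∡ B C A + ∡ A C D = ∡ B C D := oangle_add hBC hAC hDC
  have hsign : (∡ B C A).sign = (∡ A C D).sign := by
    have h1 : (∡ A D C).sign = -(∡ A B C).sign := hside.oangle_sign_eq_neg hA hC
    have h2 : (∡ B C A).sign = (∡ A B C).sign := oangle_rotate_sign A B C
    have h3 : (∡ C D A).sign = (∡ A C D).sign := oangle_rotate_sign A C D
    have h4 : ∡ C D A = -∡ A D C := oangle_rev A D C
    rw [h2, ← h3, h4, Real.Angle.sign_neg, h1, neg_neg]
  have h0 : (∡ B C A).sign ≠ 0 := by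
    intro hz
    rw [oangle_sign_eq_zero_iff_collinear] at hz
    exact hBs (hz.mem_affineSpan_of_mem_of_ne
      (Set.mem_insert_of_mem _ (by simp)) (by simp) (by simp) hAC)
  have e1 : ∠ B C A = |(∡ B C A).toReal| := angle_eq_abs_oangle_toReal hBC hAC
  have e2 : ∠ A C D = |(∡ A C D).toReal| := angle_eq_abs_oangle_toReal hAC hDC
  have e3 : ∠ B C D = |(∡ B C D).toReal| := angle_eq_abs_oangle_toReal hBC hDC
  rw [e1, e2, e3, ← hadd]
  exact angle_abs_add _ _ hsign h0

lemma calc_real (p r cb b α α₀ : ℝ) (hp : 0 < p) (hcb : 0 < cb) (hb : 0 < b)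
    (hrnn : 0 ≤ r) (hpyth : r * r = p * p + cb * cb)
    (hlaw : p * p = r * r + b * b - 2 * r * b * Real.cos α)
    (hα1 : 0 ≤ α) (hα2 : α ≤ π) (hα0nn : 0 ≤ α₀) (hα0lt : α₀ < π / 2)
    (hsin0 : Real.sin α₀ * r = p) (hcos0 : Real.cos α₀ * r = cb) :
    α ≤ α₀ ∧ (α = α₀ → b = cb) := by
  have hr : 0 < r := by nlinarith
  have hplt : p < r := by nlinarith
  have hcos : 0 < Real.cos α := by
    by_contra h
    push_neg at h
    nlinarith [mul_nonneg (by positivity : (0:ℝ) ≤ 2 * r * b) (neg_nonneg.2 h)]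
  have hαlt : α < π / 2 := by
    by_contra h
    push_neg at h
    have := Real.cos_nonpos_of_pi_div_two_le_of_le h (by linarith [Real.pi_pos])
    linarith
  have hsincos : Real.sin α ^ 2 + Real.cos α ^ 2 = 1 := Real.sin_sq_add_cos_sq α
  have hkey : p ^ 2 - (r * Real.sin α) ^ 2 = (r * Real.cos α - b) ^ 2 := by nlinarith
  have hsinnn : 0 ≤ Real.sin α := Real.sin_nonneg_of_nonneg_of_le_pi hα1 hα2
  have hsinle : r * Real.sin α ≤ p := by
    nlinarith [sq_nonneg (r * Real.cos α - b), mul_nonneg hr.le hsinnn]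
  have hle : α ≤ α₀ := by
    by_contra h
    push_neg at h
    have hmono := Real.strictMonoOn_sin (a := α₀) (b := α)
      ⟨by linarith [Real.pi_pos], by linarith⟩ ⟨by linarith [Real.pi_pos], by linarith⟩ h
    have := mul_lt_mul_of_pos_right hmono hr
    linarith
  refine ⟨hle, fun heq => ?_⟩
  have hrs : r * Real.sin α = p := by rw [heq]; linarith
  have hsq : (r * Real.sin α) ^ 2 = p ^ 2 := by rw [hrs]
  have hzero : (r * Real.cos α - b) ^ 2 = 0 := by linarith
  have hzero' : r * Real.cos α - b = 0 := sq_eq_zero_iff.mp hzero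
  rw [← hcos0, ← heq]
  linarith

lemma side_lemma {A B C A' B' C' : Plane} (hB : ∠ A B C = π / 2)
    (hBA : B ≠ A) (hBC : B ≠ C) (hBC' : B' ≠ C')
    (h1 : dist A' B' = dist A B) (h3 : dist A' C' = dist A C) :
    (∠ B' C' A' ≤ ∠ B C A ∧ ∠ B C A < π / 2) ∧
      (∠ B' C' A' = ∠ B C A → dist C' B' = dist C B) := by
  have hpyth : dist A C * dist A C = dist A B * dist A B + dist C B * dist C B :=
    (dist_sq_eq_dist_sq_add_dist_sq_iff_angle_eq_pi_div_two A B C).2 hB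
  have hlaw : dist A' B' * dist A' B' = dist A' C' * dist A' C' + dist B' C' * dist B' C' -
      2 * dist A' C' * dist B' C' * Real.cos (∠ A' C' B') :=
    EuclideanGeometry.law_cos A' C' B'
  rw [h1, h3, angle_comm A' C' B'] at hlaw
  have := calc_real (dist A B) (dist A C) (dist C B) (dist B' C') (∠ B' C' A') (∠ B C A)
    (dist_pos.2 (Ne.symm hBA)) (dist_pos.2 (Ne.symm hBC)) (dist_pos.2 hBC')
    dist_nonneg hpyth hlaw (angle_nonneg _ _ _) (angle_le_pi _ _ _) (angle_nonneg _ _ _)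
    (angle_lt_pi_div_two_of_angle_eq_pi_div_two hB (Ne.symm hBC))
    (sin_angle_mul_dist_of_angle_eq_pi_div_two hB)
    (cos_angle_mul_dist_of_angle_eq_pi_div_two hB)
  refine ⟨⟨this.1, angle_lt_pi_div_two_of_angle_eq_pi_div_two hB (Ne.symm hBC)⟩, fun heq => ?_⟩
  rw [dist_comm C' B']
  exact this.2 heq

lemma gram_isometry (u v : Fin 2 → Plane)
    (hu : LinearIndependent ℝ u) (hv : LinearIndependent ℝ v)
    (hg : ∀ i j, ⟪v i, v j⟫ = ⟪u i, u j⟫) :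
    ∃ f : Plane ≃ₗᵢ[ℝ] Plane, ∀ i, f (u i) = v i := by
  have hcard : Fintype.card (Fin 2) = Module.finrank ℝ Plane := by
    simp [finrank_euclideanSpace_fin]
  let bu := basisOfLinearIndependentOfCardEqFinrank hu hcard
  let bv := basisOfLinearIndependentOfCardEqFinrank hv hcard
  have hbu : ∀ i, bu i = u i := fun i => by
    simp [bu, coe_basisOfLinearIndependentOfCardEqFinrank]
  have hbv : ∀ i, bv i = v i := fun i => by
    simp [bv, coe_basisOfLinearIndependentOfCardEqFinrank]
  let f₀ : Plane ≃ₗ[ℝ] Plane := bu.equiv bv (Equiv.refl _)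
  have hf₀ : ∀ i, f₀ (u i) = v i := fun i => by
    rw [← hbu i, ← hbv i]
    simp [f₀, Module.Basis.equiv_apply]
  have hinner : ∀ x y : Plane, ⟪f₀ x, f₀ y⟫ = ⟪x, y⟫ := by
    intro x y
    rw [← bu.sum_repr x, ← bu.sum_repr y]
    simp only [map_sum, map_smul, sum_inner, inner_sum, real_inner_smul_left,
      real_inner_smul_right]
    refine Finset.sum_congr rfl fun i _ => Finset.sum_congr rfl fun j _ => ?_
    rw [hbu i, hbu j, hf₀ i, hf₀ j, hg]
  exact ⟨f₀.isometryOfInner hinner, fun i => hf₀ i⟩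

lemma indep_of_not_mem {A B C : Plane} (hAC : A ≠ C)
    (hB : B ∉ affineSpan ℝ ({A, C} : Set Plane)) :
    LinearIndependent ℝ ![B - A, C - A] := by
  rw [LinearIndependent.pair_iff]
  intro s t hst
  have hs0 : s = 0 := by
    by_contra hs
    apply hB
    have h0 : s • (B - A) = (-t) • (C - A) := by
      rw [neg_smul]; exact eq_neg_of_add_eq_zero_left hst
    have h1 : B - A = (-t / s) • (C - A) := by
      calc B - A = s⁻¹ • (s • (B - A)) := by
            rw [smul_smul, inv_mul_cancel₀ hs, one_smul]
        _ = s⁻¹ • ((-t) • (C - A)) := by rw [h0]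
        _ = (-t / s) • (C - A) := by rw [smul_smul]; ring_nf
    have h2 : ((-t / s) • (C -ᵥ A) +ᵥ A : Plane) ∈ line[ℝ, A, C] :=
      smul_vsub_vadd_mem_affineSpan_pair _ _ _
    have h3 : B = (-t / s) • (C -ᵥ A) +ᵥ A := by
      have : B = (-t / s) • (C - A) + A := by rw [← h1]; abel
      simpa [vsub_eq_sub, vadd_eq_add] using this
    rwa [← h3] at h2
  refine ⟨hs0, ?_⟩
  rw [hs0, zero_smul, zero_add] at hst
  rcases smul_eq_zero.1 hst with ht | hCA
  · exact ht
  · exact absurd (sub_eq_zero.1 hCA) (Ne.symm hAC)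

lemma pin_point {A' C' B' X Y : Plane} (hAC' : A' ≠ C')
    (hX : (affineSpan ℝ ({A', C'} : Set Plane)).SOppSide B' X)
    (hY : (affineSpan ℝ ({A', C'} : Set Plane)).SOppSide B' Y)
    (hdA : dist A' X = dist A' Y) (hdC : dist C' X = dist C' Y) : X = Y := by
  by_contra hne
  set s' := affineSpan ℝ ({A', C'} : Set Plane) with hs'
  have hA'm : A' ∈ s' := left_mem_affineSpan_pair ℝ A' C'
  have hC'm : C' ∈ s' := right_mem_affineSpan_pair ℝ A' C'
  have hsub : s' ≤ AffineSubspace.perpBisector X Y := by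
    rw [hs', affineSpan_le]
    rintro z hz
    simp only [Set.mem_insert_iff, Set.mem_singleton_iff] at hz
    rcases hz with rfl | rfl
    · exact AffineSubspace.mem_perpBisector_iff_dist_eq.2 hdA
    · exact AffineSubspace.mem_perpBisector_iff_dist_eq.2 hdC
  have hXY : (X : Plane) -ᵥ Y ≠ 0 := vsub_ne_zero.2 hne
  have hd1 : Module.finrank ℝ (AffineSubspace.perpBisector X Y).direction ≤ 1 := by
    rw [AffineSubspace.direction_perpBisector]
    have horth := Submodule.finrank_add_finrank_orthogonal ((ℝ ∙ (Y -ᵥ X)) : Submodule ℝ Plane)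
    have h1 : Module.finrank ℝ (ℝ ∙ (Y -ᵥ X)) = 1 :=
      finrank_span_singleton (vsub_ne_zero.2 (Ne.symm hne))
    have h2 : Module.finrank ℝ Plane = 2 := finrank_euclideanSpace_fin
    omega
  have hd2 : 1 ≤ Module.finrank ℝ s'.direction := by
    rw [hs', direction_affineSpan, vectorSpan_pair]
    rw [finrank_span_singleton (vsub_ne_zero.2 hAC')]
  have hdir : s'.direction = (AffineSubspace.perpBisector X Y).direction :=
    Submodule.eq_of_le_of_finrank_le (AffineSubspace.direction_le hsub) (le_trans hd1 hd2)
  have heq : s' = AffineSubspace.perpBisector X Y :=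
    AffineSubspace.ext_of_direction_eq hdir ⟨A', hA'm, hsub hA'm⟩
  have hXs : X ∉ s' := by
    intro h
    rw [heq, AffineSubspace.mem_perpBisector_iff_dist_eq] at h
    simp only [dist_self] at h
    exact hne (dist_eq_zero.1 h.symm)
  have hYs : Y ∉ s' := by
    intro h
    rw [heq, AffineSubspace.mem_perpBisector_iff_dist_eq] at h
    simp only [dist_self] at h
    exact hne (dist_eq_zero.1 h).symm
  have hmid : midpoint ℝ X Y ∈ s' := by
    rw [heq]; exact AffineSubspace.midpoint_mem_perpBisector X Y
  have hw : s'.WOppSide X Y := by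
    refine ⟨midpoint ℝ X Y, hmid, midpoint ℝ X Y, hmid, ?_⟩
    rw [left_vsub_midpoint, midpoint_vsub_right]
    exact SameRay.refl _
  exact (hX.symm.trans hY).not_sOppSide ⟨hw, hXs, hYs⟩

lemma inner_eq_of_dist_eq {X Y Z X' Y' Z' : Plane} (h1 : dist X' Y' = dist X Y)
    (h2 : dist X' Z' = dist X Z) (h3 : dist Y' Z' = dist Y Z) :
    ⟪Y' - X', Z' - X'⟫ = ⟪Y - X, Z - X⟫ := by
  have fm : ∀ x y : Plane, ⟪x, y⟫ = (‖x‖ ^ 2 + ‖y‖ ^ 2 - ‖x - y‖ ^ 2) / 2 := fun x y => by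
    rw [norm_sub_sq_real]; ring
  rw [fm, fm, sub_sub_sub_cancel_right, sub_sub_sub_cancel_right]
  have e1 : ‖Y' - X'‖ = ‖Y - X‖ := by
    rw [← dist_eq_norm, ← dist_eq_norm, dist_comm Y' X', dist_comm Y X]; exact h1
  have e2 : ‖Z' - X'‖ = ‖Z - X‖ := by
    rw [← dist_eq_norm, ← dist_eq_norm, dist_comm Z' X', dist_comm Z X]; exact h2
  have e3 : ‖Y' - Z'‖ = ‖Y - Z‖ := by
    rw [← dist_eq_norm, ← dist_eq_norm]; exact h3
  rw [e1, e2, e3]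

/-- A convex quadrilateral `ABCD` with right angles at `B` and `D` is determined up to
congruence by the four measurements `|AB|`, `|AD|`, `|AC|` and `∠BCD`. -/
theorem exceptional_quadrilateral (A B C D A' B' C' D' : Plane)
    (hB : ∠ A B C = π / 2) (hD : ∠ A D C = π / 2)
    (hside : (affineSpan ℝ ({A, C} : Set Plane)).SOppSide B D)
    (h1 : dist A' B' = dist A B) (h2 : dist A' D' = dist A D)
    (h3 : dist A' C' = dist A C)
    (h4 : ∠ B' C' D' = ∠ B C D)
    (hside' : (affineSpan ℝ ({A', C'} : Set Plane)).SOppSide B' D') :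
    ∃ φ : Plane ≃ᵢ Plane, φ A = A' ∧ φ B = B' ∧ φ C = C' ∧ φ D = D' := by
  have hAmem : A ∈ affineSpan ℝ ({A, C} : Set Plane) := mem_affineSpan ℝ (by simp)
  have hCmem : C ∈ affineSpan ℝ ({A, C} : Set Plane) := mem_affineSpan ℝ (by simp)
  have hAmem' : A' ∈ affineSpan ℝ ({A', C'} : Set Plane) := mem_affineSpan ℝ (by simp)
  have hCmem' : C' ∈ affineSpan ℝ ({A', C'} : Set Plane) := mem_affineSpan ℝ (by simp)
  have hBA : B ≠ A := fun h => hside.left_notMem (h ▸ hAmem)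
  have hBC : B ≠ C := fun h => hside.left_notMem (h ▸ hCmem)
  have hDA : D ≠ A := fun h => hside.right_notMem (h ▸ hAmem)
  have hDC : D ≠ C := fun h => hside.right_notMem (h ▸ hCmem)
  have hBA' : B' ≠ A' := fun h => hside'.left_notMem (h ▸ hAmem')
  have hBC' : B' ≠ C' := fun h => hside'.left_notMem (h ▸ hCmem')
  have hDA' : D' ≠ A' := fun h => hside'.right_notMem (h ▸ hAmem')
  have hDC' : D' ≠ C' := fun h => hside'.right_notMem (h ▸ hCmem')
  have hAC : A ≠ C := by
    rintro rfl
    rw [angle_self_of_ne hBA.symm] at hB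
    have := Real.pi_pos
    linarith
  have hAC' : A' ≠ C' := by
    intro h
    rw [h, dist_self] at h3
    exact hAC (dist_eq_zero.1 h3.symm)
  -- angle analysis
  have hsplit := split_angle hAC hside
  have hsplit' := split_angle hAC' hside'
  have hSB := side_lemma hB hBA hBC hBC' h1 h3
  have hSD := side_lemma hD hDA hDC hDC' h2 h3
  have eACD : ∠ A C D = ∠ D C A := angle_comm A C D
  have eACD' : ∠ A' C' D' = ∠ D' C' A' := angle_comm A' C' D'
  rw [eACD] at hsplit
  rw [eACD'] at hsplit'
  obtain ⟨a₀, ha₀⟩ : ∃ x, ∠ B C A = x := ⟨_, rfl⟩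
  obtain ⟨d₀, hd₀⟩ : ∃ x, ∠ D C A = x := ⟨_, rfl⟩
  obtain ⟨a₁, ha₁⟩ : ∃ x, ∠ B' C' A' = x := ⟨_, rfl⟩
  obtain ⟨d₁, hd₁⟩ : ∃ x, ∠ D' C' A' = x := ⟨_, rfl⟩
  obtain ⟨g₀, hg₀⟩ : ∃ x, ∠ B C D = x := ⟨_, rfl⟩
  obtain ⟨g₁, hg₁⟩ : ∃ x, ∠ B' C' D' = x := ⟨_, rfl⟩
  rw [ha₀, hd₀, hg₀] at hsplit
  rw [ha₁, hd₁, hg₁] at hsplit'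
  rw [hg₀, hg₁] at h4
  rw [ha₀, ha₁] at hSB
  rw [hd₀, hd₁] at hSD
  have hg0le : g₀ ≤ π := hg₀ ▸ angle_le_pi B C D
  have hpi := Real.pi_pos
  have hsum : g₀ = a₀ + d₀ := by
    rcases hsplit with h | h
    · exact h
    · exfalso
      have h1' := hSB.1.2
      have h2' := hSD.1.2
      linarith
  have haeq : a₁ = a₀ ∧ d₁ = d₀ := by
    have hb1 := hSB.1.1
    have hb2 := hSD.1.1
    rcases hsplit' with h | h
    · constructor <;> linarith
    · exfalso
      have h1' := hSB.1.2
      have h2' := hSD.1.2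
      linarith
  have hCB : dist C' B' = dist C B := hSB.2 haeq.1
  have hCD : dist C' D' = dist C D := hSD.2 haeq.2
  -- build the isometry
  have hu := indep_of_not_mem hAC hside.left_notMem
  have hv := indep_of_not_mem hAC' hside'.left_notMem
  have hBCd : dist B' C' = dist B C := by
    rw [dist_comm B' C', dist_comm B C]; exact hCB
  have hg : ∀ i j, ⟪(![B' - A', C' - A'] : Fin 2 → Plane) i,
      (![B' - A', C' - A'] : Fin 2 → Plane) j⟫ =
      ⟪(![B - A, C - A] : Fin 2 → Plane) i, (![B - A, C - A] : Fin 2 → Plane) j⟫ := by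
    intro i j
    fin_cases i <;> fin_cases j <;>
      simp only [Matrix.cons_val_zero, Matrix.cons_val_one, Matrix.head_cons]
    · exact inner_eq_of_dist_eq h1 h1 (by simp)
    · exact inner_eq_of_dist_eq h1 h3 hBCd
    · exact inner_eq_of_dist_eq h3 h1 (by rw [dist_comm C' B', dist_comm C B]; exact hBCd)
    · exact inner_eq_of_dist_eq h3 h3 (by simp)
  obtain ⟨f, hf⟩ := gram_isometry _ _ hu hv hg
  have hfB : f (B - A) = B' - A' := by simpa using hf 0
  have hfC : f (C - A) = C' - A' := by simpa using hf 1
  let φ : Plane ≃ᵃⁱ[ℝ] Plane := AffineIsometryEquiv.mk' (fun x => f (x - A) + A')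
    f A (fun p' => by simp [vsub_eq_sub, vadd_eq_add])
  have hφ : ∀ x, φ x = f (x - A) + A' := fun x => rfl
  have hφA : φ A = A' := by rw [hφ]; simp
  have hφB : φ B = B' := by rw [hφ, hfB]; abel
  have hφC : φ C = C' := by rw [hφ, hfC]; abel
  have hinj : Function.Injective (φ.toAffineEquiv.toAffineMap : Plane → Plane) := by
    intro x y hxy
    exact φ.toAffineEquiv.injective hxy
  have hmap := hinj.sOppSide_map_iff.2 hside
  have hcoe : ∀ x, φ.toAffineEquiv.toAffineMap x = φ x := fun x => rfl
  have himg : (affineSpan ℝ ({A, C} : Set Plane)).map φ.toAffineEquiv.toAffineMap =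
      affineSpan ℝ ({A', C'} : Set Plane) := by
    rw [AffineSubspace.map_span, Set.image_pair, hcoe A, hcoe C, hφA, hφC]
  rw [himg, hcoe B, hcoe D, hφB] at hmap
  have hdXA : dist A' (φ D) = dist A' D' := by
    rw [h2]
    conv_lhs => rw [← hφA]
    rw [AffineIsometryEquiv.dist_map]
  have hdXC : dist C' (φ D) = dist C' D' := by
    rw [hCD]
    conv_lhs => rw [← hφC]
    rw [AffineIsometryEquiv.dist_map]
  have hDfix : φ D = D' := pin_point hAC' hmap hside' hdXA hdXC
  exact ⟨φ.toIsometryEquiv, hφA, hφB, hφC, hDfix⟩
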